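/- Let (E, F) be a resistance form on a set X whose resistance metric R is complete and such that (X,R) is doubling and uniformly perfect. Let A₁, A₂ be nonempty subsets of X such that A₁ is bounded in (X,R) and inf{R(x,y) : x ∈ A₁, y ∈ A₂} > 0. Then 𝓡(A₁,A₂) > 0. -/

import Mathlib

open Filter Set Metric
open scoped ENNReal Topology

/-- A resistance form `(E, F)` on a set `X` (Kigami):
`F` is a linear subspace of the real-valued functions on `X`, `E` is a nonnegative
symmetric bilinear form on `F` such that (RF1) constants belong to `F` and
`E(u,u) = 0` iff `u` is constant, (RF2) the quotient of `F` by the constants is a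
Hilbert space under `E` (stated as completeness of the `E`-seminorm on `F`),
(RF3) points of `X` are separated by `F`, (RF4) for `x ≠ y` the quantity
`R(x,y) = (inf {E(u,u) : u ∈ F, u x = 1, u y = 0})⁻¹` is finite (i.e. the infimum
is positive; an admissible `u` always exists), and (RF5) the Markov property holds
for the unit truncation. -/
structure ResistanceForm (X : Type*) where
  F : Set (X → ℝ)
  E : (X → ℝ) → (X → ℝ) → ℝ
  zero_mem : (0 : X → ℝ) ∈ F
  add_mem : ∀ {u v : X → ℝ}, u ∈ F → v ∈ F → u + v ∈ F
  smul_mem : ∀ (c : ℝ) {u : X → ℝ}, u ∈ F → c • u ∈ F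
  const_mem : ∀ c : ℝ, (fun _ => c) ∈ F
  symm : ∀ u ∈ F, ∀ v ∈ F, E u v = E v u
  add_left : ∀ u ∈ F, ∀ v ∈ F, ∀ w ∈ F, E (u + v) w = E u w + E v w
  smul_left : ∀ (c : ℝ), ∀ u ∈ F, ∀ v ∈ F, E (c • u) v = c * E u v
  nonneg : ∀ u ∈ F, 0 ≤ E u u
  null_iff_const : ∀ u ∈ F, (E u u = 0 ↔ ∃ c : ℝ, ∀ x, u x = c)
  complete : ∀ u : ℕ → (X → ℝ), (∀ n, u n ∈ F) →
    (∀ ε : ℝ, 0 < ε → ∃ N : ℕ, ∀ m ≥ N, ∀ n ≥ N, E (u m - u n) (u m - u n) < ε) →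
    ∃ v ∈ F, ∀ ε : ℝ, 0 < ε → ∃ N : ℕ, ∀ n ≥ N, E (v - u n) (v - u n) < ε
  sep : ∀ x y : X, x ≠ y → ∃ u ∈ F, u x ≠ u y
  exists_unit : ∀ x y : X, x ≠ y → ∃ u ∈ F, u x = 1 ∧ u y = 0
  inf_pos : ∀ x y : X, x ≠ y →
    0 < sInf {e : ℝ | ∃ u ∈ F, u x = 1 ∧ u y = 0 ∧ E u u = e}
  markov : ∀ u ∈ F, (fun x => max 0 (min 1 (u x))) ∈ F ∧
    E (fun x => max 0 (min 1 (u x))) (fun x => max 0 (min 1 (u x))) ≤ E u u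

namespace ResistanceForm

variable {X : Type*}

open Classical in
/-- The resistance metric `R` associated with a resistance form:
`R(x,x) = 0` and `R(x,y) = (inf {E(u,u) : u ∈ F, u x = 1, u y = 0})⁻¹` for `x ≠ y`. -/
noncomputable def rmetric (rf : ResistanceForm X) (x y : X) : ℝ :=
  if x = y then 0
  else (sInf {e : ℝ | ∃ u ∈ rf.F, u x = 1 ∧ u y = 0 ∧ rf.E u u = e})⁻¹

open Classical in
/-- The resistance `𝓡(A,B)` between two sets: the reciprocal of the minimal energy of
functions that are `≡ 1` on `A` and `≡ 0` on `B` if such functions exist, `0` if no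
such function exists, and `∞` if `A` or `B` is empty. -/
noncomputable def setRes (rf : ResistanceForm X) (A B : Set X) : ℝ≥0∞ :=
  if A.Nonempty ∧ B.Nonempty then
    (if ∃ u ∈ rf.F, (∀ x ∈ A, u x = 1) ∧ (∀ x ∈ B, u x = 0) then
      (ENNReal.ofReal
        (sInf {e : ℝ | ∃ u ∈ rf.F, (∀ x ∈ A, u x = 1) ∧ (∀ x ∈ B, u x = 0) ∧ rf.E u u = e}))⁻¹
    else 0)
  else ⊤

end ResistanceForm

/-- A distance function `ρ` on `X` is doubling: there is `N ∈ ℕ` such that every ball of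
radius `2r` is covered by `N` balls of radius `r`. -/
def DoublingOf {X : Type*} (ρ : X → X → ℝ) : Prop :=
  ∃ N : ℕ, ∀ (x : X) (r : ℝ), ∃ s : Finset X, s.card ≤ N ∧
    {y : X | ρ x y < 2 * r} ⊆ ⋃ z ∈ s, {y : X | ρ z y < r}

/-- A distance function `ρ` on `X` is uniformly perfect: there is `γ > 1` such that
`B(x, γ r) \ B(x, r) ≠ ∅` whenever `B(x,r)` is not the whole space. -/
def UniformlyPerfectOf {X : Type*} (ρ : X → X → ℝ) : Prop :=
  ∃ γ : ℝ, 1 < γ ∧ ∀ (x : X) (r : ℝ), 0 < r → {y : X | ρ x y < r} ≠ Set.univ →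
    ({y : X | ρ x y < γ * r} \ {y : X | ρ x y < r}).Nonempty

section RFAux

variable {X : Type*}

namespace ResistanceForm

variable (rf : ResistanceForm X)

lemma sub_mem' {u v : X → ℝ} (hu : u ∈ rf.F) (hv : v ∈ rf.F) : u - v ∈ rf.F := by
  have : u - v = u + (-1 : ℝ) • v := by funext z; simp; ring
  rw [this]; exact rf.add_mem hu (rf.smul_mem _ hv)

lemma neg_mem' {u : X → ℝ} (hu : u ∈ rf.F) : -u ∈ rf.F := by
  have : -u = (0:X → ℝ) - u := by funext z; simp
  rw [this]; exact rf.sub_mem' rf.zero_mem hu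

lemma add_right' {u v w : X → ℝ} (hu : u ∈ rf.F) (hv : v ∈ rf.F) (hw : w ∈ rf.F) :
    rf.E u (v + w) = rf.E u v + rf.E u w := by
  rw [rf.symm u hu (v+w) (rf.add_mem hv hw), rf.add_left v hv w hw u hu,
    rf.symm v hv u hu, rf.symm w hw u hu]

lemma smul_right' (c : ℝ) {u v : X → ℝ} (hu : u ∈ rf.F) (hv : v ∈ rf.F) :
    rf.E u (c • v) = c * rf.E u v := by
  rw [rf.symm u hu (c • v) (rf.smul_mem c hv), rf.smul_left c v hv u hu, rf.symm v hv u hu]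

lemma expand' {u v : X → ℝ} (hu : u ∈ rf.F) (hv : v ∈ rf.F) :
    rf.E (u + v) (u + v) = rf.E u u + 2 * rf.E u v + rf.E v v := by
  rw [rf.add_left u hu v hv (u+v) (rf.add_mem hu hv), rf.add_right' hu hu hv,
    rf.add_right' hv hu hv, rf.symm v hv u hu]
  ring

lemma cs' {u v : X → ℝ} (hu : u ∈ rf.F) (hv : v ∈ rf.F) :
    (rf.E u v) ^ 2 ≤ rf.E u u * rf.E v v := by
  have key : ∀ t : ℝ, 0 ≤ rf.E u u + 2 * t * rf.E u v + t ^ 2 * rf.E v v := by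
    intro t
    have h := rf.nonneg (u + t • v) (rf.add_mem hu (rf.smul_mem t hv))
    rw [rf.expand' hu (rf.smul_mem t hv), rf.smul_right' t hu hv,
      rf.smul_left t v hv (t • v) (rf.smul_mem t hv), rf.smul_right' t hv hv] at h
    nlinarith [h]
  rcases eq_or_lt_of_le (rf.nonneg v hv) with h0 | hpos
  · have hb : rf.E u v = 0 := by
      by_contra hb
      have h1 := key (-(rf.E u u + 1) / (2 * rf.E u v))
      have e1 : 2 * (-(rf.E u u + 1) / (2 * rf.E u v)) * rf.E u v = -(rf.E u u + 1) := by
        field_simp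
      rw [e1, ← h0, mul_zero] at h1
      linarith
    rw [hb, ← h0]; nlinarith [rf.nonneg u hu]
  · have h1 := key (-(rf.E u v) / rf.E v v)
    have e1 : rf.E u u + 2 * (-(rf.E u v) / rf.E v v) * rf.E u v
        + (-(rf.E u v) / rf.E v v) ^ 2 * rf.E v v
        = rf.E u u - (rf.E u v) ^ 2 / rf.E v v := by
      field_simp; ring
    rw [e1, sub_nonneg, div_le_iff₀ hpos] at h1
    linarith

/-- the energy seminorm -/
noncomputable def nrm (u : X → ℝ) : ℝ := Real.sqrt (rf.E u u)

lemma nrm_nonneg (u : X → ℝ) : 0 ≤ rf.nrm u := Real.sqrt_nonneg _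

lemma nrm_sq {u : X → ℝ} (hu : u ∈ rf.F) : rf.nrm u ^ 2 = rf.E u u :=
  Real.sq_sqrt (rf.nonneg u hu)

lemma E_le_nrm_mul {u v : X → ℝ} (hu : u ∈ rf.F) (hv : v ∈ rf.F) :
    rf.E u v ≤ rf.nrm u * rf.nrm v := by
  have h := rf.cs' hu hv
  have h2 : rf.E u v ≤ |rf.E u v| := le_abs_self _
  have h3 : |rf.E u v| = Real.sqrt ((rf.E u v) ^ 2) := (Real.sqrt_sq_eq_abs _).symm
  calc rf.E u v ≤ Real.sqrt ((rf.E u v)^2) := by rw [← h3]; exact h2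
    _ ≤ Real.sqrt (rf.E u u * rf.E v v) := Real.sqrt_le_sqrt h
    _ = rf.nrm u * rf.nrm v := Real.sqrt_mul (rf.nonneg u hu) _

lemma nrm_add_le {u v : X → ℝ} (hu : u ∈ rf.F) (hv : v ∈ rf.F) :
    rf.nrm (u + v) ≤ rf.nrm u + rf.nrm v := by
  have h : rf.E (u+v) (u+v) ≤ (rf.nrm u + rf.nrm v) ^ 2 := by
    rw [rf.expand' hu hv]
    have := rf.E_le_nrm_mul hu hv
    have h1 := rf.nrm_sq hu
    have h2 := rf.nrm_sq hv
    nlinarith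
  have := Real.sqrt_le_sqrt h
  rwa [Real.sqrt_sq (add_nonneg (rf.nrm_nonneg u) (rf.nrm_nonneg v))] at this

lemma E_const_zero (c : ℝ) : rf.E (fun _ => c) (fun _ => c) = 0 :=
  (rf.null_iff_const _ (rf.const_mem c)).mpr ⟨c, fun _ => rfl⟩

lemma E_const_right {u : X → ℝ} (hu : u ∈ rf.F) (c : ℝ) : rf.E u (fun _ => c) = 0 := by
  have h := rf.cs' hu (rf.const_mem c)
  rw [rf.E_const_zero c, mul_zero] at h
  nlinarith [h]

lemma E_add_const {u : X → ℝ} (hu : u ∈ rf.F) (c : ℝ) :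
    rf.E (u + fun _ => c) (u + fun _ => c) = rf.E u u := by
  rw [rf.expand' hu (rf.const_mem c), rf.E_const_right hu c, rf.E_const_zero c]; ring

lemma E_smul (c : ℝ) {u : X → ℝ} (hu : u ∈ rf.F) :
    rf.E (c • u) (c • u) = c ^ 2 * rf.E u u := by
  rw [rf.smul_left c u hu _ (rf.smul_mem c hu), rf.smul_right' c hu hu]; ring

lemma nrm_sub_comm {u v : X → ℝ} (hu : u ∈ rf.F) (hv : v ∈ rf.F) :
    rf.E (u - v) (u - v) = rf.E (v - u) (v - u) := by
  have h : v - u = (-1 : ℝ) • (u - v) := by funext z; simp [Pi.sub_apply]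
  rw [h, rf.E_smul (-1) (rf.sub_mem' hu hv)]; ring

/-- Finset sums stay in `F`, with seminorm bound. -/
lemma sum_mem_nrm {ι : Type*} (s : Finset ι) (f : ι → X → ℝ) (hf : ∀ i ∈ s, f i ∈ rf.F) :
    (∑ i ∈ s, f i) ∈ rf.F ∧ rf.nrm (∑ i ∈ s, f i) ≤ ∑ i ∈ s, rf.nrm (f i) := by
  classical
  induction s using Finset.induction_on with
  | empty =>
    refine ⟨by simpa using rf.zero_mem, ?_⟩
    have h0 : rf.E 0 0 = 0 := rf.E_const_zero 0
    simp [ResistanceForm.nrm, h0]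
  | @insert a s' hx ih =>
    have h1 : f a ∈ rf.F := hf a (Finset.mem_insert_self a s')
    have h2 := ih (fun i hi => hf i (Finset.mem_insert_of_mem hi))
    rw [Finset.sum_insert hx, Finset.sum_insert hx]
    exact ⟨rf.add_mem h1 h2.1,
      le_trans (rf.nrm_add_le h1 h2.1) (by linarith [h2.2])⟩

end ResistanceForm

section Holder

variable {X : Type*} [MetricSpace X] (rf : ResistanceForm X)

/-- the infimum defining the resistance equals `(dist x y)⁻¹`, and `dist x y > 0`. -/
lemma sInf_eq_inv_dist (hR : ∀ x y : X, dist x y = rf.rmetric x y) {x y : X} (hxy : x ≠ y) :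
    sInf {e : ℝ | ∃ u ∈ rf.F, u x = 1 ∧ u y = 0 ∧ rf.E u u = e} = (dist x y)⁻¹ ∧
      0 < dist x y := by
  have hpos := rf.inf_pos x y hxy
  have h1 : dist x y = (sInf {e : ℝ | ∃ u ∈ rf.F, u x = 1 ∧ u y = 0 ∧ rf.E u u = e})⁻¹ := by
    rw [hR x y, ResistanceForm.rmetric, if_neg hxy]
  constructor
  · rw [h1, inv_inv]
  · rw [h1]; exact inv_pos.mpr hpos

/-- Hölder estimate for functions of finite energy. -/
lemma holder (hR : ∀ x y : X, dist x y = rf.rmetric x y) {u : X → ℝ} (hu : u ∈ rf.F) (a b : X) :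
    (u a - u b) ^ 2 ≤ dist a b * rf.E u u := by
  rcases eq_or_ne a b with rfl | hab
  · simp
  rcases eq_or_ne (u a) (u b) with he | he
  · rw [he, sub_self]
    simpa using mul_nonneg dist_nonneg (rf.nonneg u hu)
  · set t : ℝ := u a - u b with htdef
    have ht : t ≠ 0 := sub_ne_zero.mpr he
    set v : X → ℝ := t⁻¹ • (u + fun _ => -(u b)) with hvdef
    have hv : v ∈ rf.F := rf.smul_mem _ (rf.add_mem hu (rf.const_mem _))
    have hva : v a = 1 := by
      simp only [hvdef, Pi.smul_apply, Pi.add_apply, smul_eq_mul]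
      rw [show u a + -u b = t from rfl]
      exact inv_mul_cancel₀ ht
    have hvb : v b = 0 := by
      simp [hvdef]
    have hEv : rf.E v v = (t⁻¹) ^ 2 * rf.E u u := by
      rw [hvdef, rf.E_smul _ (rf.add_mem hu (rf.const_mem _)), rf.E_add_const hu]
    have hmem : rf.E v v ∈ {e : ℝ | ∃ w ∈ rf.F, w a = 1 ∧ w b = 0 ∧ rf.E w w = e} :=
      ⟨v, hv, hva, hvb, rfl⟩
    have hbdd : BddBelow {e : ℝ | ∃ w ∈ rf.F, w a = 1 ∧ w b = 0 ∧ rf.E w w = e} := by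
      refine ⟨0, fun e he => ?_⟩
      obtain ⟨w, hw, -, -, hE⟩ := he
      exact hE ▸ rf.nonneg w hw
    obtain ⟨hinf, hdpos⟩ := sInf_eq_inv_dist rf hR hab
    have hle : (dist a b)⁻¹ ≤ (t⁻¹) ^ 2 * rf.E u u := by
      rw [← hinf, ← hEv]; exact csInf_le hbdd hmem
    have h2 : (0:ℝ) < t ^ 2 := by positivity
    have key : t ^ 2 * (dist a b)⁻¹ ≤ rf.E u u := by
      have h3 := mul_le_mul_of_nonneg_left hle (sq_nonneg t)
      have h4 : t ^ 2 * ((t⁻¹) ^ 2 * rf.E u u) = rf.E u u := by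
        field_simp
      linarith [h3, h4.le, h4.ge]
    have h5 := mul_le_mul_of_nonneg_right key (le_of_lt hdpos)
    have h6 : t ^ 2 * (dist a b)⁻¹ * dist a b = t ^ 2 := by
      field_simp
    rw [h6] at h5
    linarith [h5]

/-- A near-minimizing potential between two points, truncated to `[0,1]`. -/
lemma exists_near_min (hR : ∀ x y : X, dist x y = rf.rmetric x y) {x y : X} (hxy : x ≠ y) :
    ∃ u ∈ rf.F, u x = 1 ∧ u y = 0 ∧ (∀ z, 0 ≤ u z ∧ u z ≤ 1) ∧
      rf.E u u ≤ 2 / dist x y := by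
  obtain ⟨hinf, hd⟩ := sInf_eq_inv_dist rf hR hxy
  set S := {e : ℝ | ∃ u ∈ rf.F, u x = 1 ∧ u y = 0 ∧ rf.E u u = e} with hS
  have hne : S.Nonempty := by
    obtain ⟨u, hu, h1, h0⟩ := rf.exists_unit x y hxy
    exact ⟨rf.E u u, u, hu, h1, h0, rfl⟩
  obtain ⟨e, heS, helt⟩ := Real.lt_sInf_add_pos hne (inv_pos.mpr hd)
  obtain ⟨u, hu, h1, h0, hEe⟩ := heS
  have hEu : rf.E u u ≤ 2 / dist x y := by
    rw [hinf] at helt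
    rw [hEe, div_eq_mul_inv]
    linarith
  obtain ⟨hmem, hle⟩ := rf.markov u hu
  refine ⟨fun z => max 0 (min 1 (u z)), hmem, ?_, ?_, ?_, le_trans hle hEu⟩
  · simp [h1]
  · simp [h0]
  · intro z
    constructor
    · exact le_max_left _ _
    · exact max_le (by norm_num) (min_le_left _ _)

/-- Cluster lemma: a function which is 1 at `x` and kills a small cluster at distance
`≥ s` from `x`, with energy `≤ 8 / s`. -/
lemma cluster_cutoff (hR : ∀ x y : X, dist x y = rf.rmetric x y) (x y₀ : X) (s : ℝ)
    (hs : 0 < s) (hd : s ≤ dist x y₀) :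
    ∃ v ∈ rf.F, v x = 1 ∧ (∀ z, 0 ≤ v z ∧ v z ≤ 1) ∧
      (∀ y, dist y₀ y ≤ s / 16 → v y = 0) ∧ rf.E v v ≤ 8 / s := by
  have hxy : x ≠ y₀ := by
    intro h; rw [h] at hd; simp at hd; linarith
  obtain ⟨u, hu, h1, h0, hbnd, hEu⟩ := exists_near_min rf hR hxy
  have hEu' : rf.E u u ≤ 2 / s := by
    have : 2 / dist x y₀ ≤ 2 / s := by
      apply div_le_div_of_nonneg_left (by norm_num) hs hd
    linarith
  set f : X → ℝ := (2 : ℝ) • u + fun _ => (-1 : ℝ) with hf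
  have hfF : f ∈ rf.F := rf.add_mem (rf.smul_mem 2 hu) (rf.const_mem _)
  have hEf : rf.E f f ≤ 8 / s := by
    rw [hf, rf.E_add_const (rf.smul_mem 2 hu), rf.E_smul 2 hu]
    have : (2:ℝ)^2 * rf.E u u ≤ 4 * (2 / s) := by nlinarith [hEu']
    calc (2:ℝ)^2 * rf.E u u ≤ 4 * (2/s) := this
      _ = 8 / s := by ring
  obtain ⟨hmem, hle⟩ := rf.markov f hfF
  refine ⟨fun z => max 0 (min 1 (f z)), hmem, ?_, ?_, ?_, le_trans hle hEf⟩
  · have hfx : f x = 1 := by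
      simp only [hf, Pi.add_apply, Pi.smul_apply, smul_eq_mul, h1]; norm_num
    simp [hfx]
  · intro z; exact ⟨le_max_left _ _, max_le (by norm_num) (min_le_left _ _)⟩
  · intro y hy
    have hsq : (u y - u y₀) ^ 2 ≤ dist y₀ y * rf.E u u := by
      have := holder rf hR hu y y₀
      rwa [dist_comm y y₀] at this
    have huy2 : (u y) ^ 2 ≤ 1 / 8 := by
      rw [h0] at hsq
      have h8 : dist y₀ y * rf.E u u ≤ (s / 16) * (2 / s) := by
        apply mul_le_mul hy hEu' (rf.nonneg u hu) (by positivity)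
      have : (s / 16) * (2 / s) = 1 / 8 := by field_simp; ring
      simp only [sub_zero] at hsq
      linarith
    have huy : u y ≤ 1 / 2 := by nlinarith [(hbnd y).1]
    have hfy : f y ≤ 0 := by
      simp only [hf, Pi.add_apply, Pi.smul_apply, smul_eq_mul]
      linarith
    show (0:ℝ) ⊔ (1 ⊓ f y) = 0
    exact max_eq_left (le_trans (min_le_right _ _) hfy)

end Holder

section Covering

variable {X : Type*} [MetricSpace X]

lemma iter_cover {N : ℕ}
    (hdb : ∀ (x : X) (r : ℝ), ∃ s : Finset X, s.card ≤ N ∧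
      {y : X | dist x y < 2 * r} ⊆ ⋃ z ∈ s, {y : X | dist z y < r}) :
    ∀ (m : ℕ) (x : X) (r : ℝ), ∃ s : Finset X, s.card ≤ N ^ (m + 1) ∧
      {y : X | dist x y < 2 * r} ⊆ ⋃ z ∈ s, {y : X | dist z y < r / 2 ^ m} := by
  intro m
  induction m with
  | zero =>
    intro x r
    obtain ⟨s, hc, hs⟩ := hdb x r
    exact ⟨s, by simpa using hc, by simpa using hs⟩
  | succ m ih =>
    intro x r
    obtain ⟨s, hc, hs⟩ := ih x r
    have hz : ∀ z : X, ∃ t : Finset X, t.card ≤ N ∧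
        {y : X | dist z y < r / 2 ^ m} ⊆ ⋃ w ∈ t, {y : X | dist w y < r / 2 ^ (m + 1)} := by
      intro z
      obtain ⟨t, htc, hts⟩ := hdb z (r / 2 ^ (m + 1))
      refine ⟨t, htc, ?_⟩
      have he : 2 * (r / 2 ^ (m + 1)) = r / 2 ^ m := by
        rw [pow_succ]; ring
      rwa [he] at hts
    choose t htc hts using hz
    classical
    refine ⟨s.biUnion t, ?_, ?_⟩
    · calc (s.biUnion t).card ≤ ∑ z ∈ s, (t z).card := Finset.card_biUnion_le
        _ ≤ ∑ _z ∈ s, N := Finset.sum_le_sum (fun z _ => htc z)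
        _ = s.card * N := by rw [Finset.sum_const, smul_eq_mul]
        _ ≤ N ^ (m + 1) * N := Nat.mul_le_mul_right N hc
        _ = N ^ (m + 2) := by ring
    · intro y hy
      obtain ⟨z, hz1, hz2⟩ := by simpa using hs hy
      have := hts z hz2
      obtain ⟨w, hw1, hw2⟩ := by simpa using this
      simp only [Set.mem_iUnion, Finset.mem_biUnion]
      exact ⟨w, ⟨z, hz1, hw1⟩, hw2⟩

end Covering

section Geom

/-- geometric tail bound: `∑_{k ∈ [n, m)} w^k ≤ w^n / (1 - w)`. -/
lemma geom_Ico_le {w : ℝ} (h0 : 0 ≤ w) (h1 : w < 1) (n m : ℕ) :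
    ∑ k ∈ Finset.Ico n m, w ^ k ≤ w ^ n / (1 - w) := by
  have h2 : (0:ℝ) < 1 - w := by linarith
  rcases le_or_gt n m with h | h
  · rw [Finset.sum_Ico_eq_sum_range]
    have he : ∀ k ∈ Finset.range (m - n), w ^ (n + k) = w ^ n * w ^ k :=
      fun k _ => pow_add w n k
    rw [Finset.sum_congr rfl he, ← Finset.mul_sum, div_eq_mul_inv]
    apply mul_le_mul_of_nonneg_left _ (pow_nonneg h0 n)
    have h3 : (∑ k ∈ Finset.range (m - n), w ^ k) * (1 - w) = 1 - w ^ (m - n) := by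
      have h4 := geom_sum_mul w (m - n)
      linear_combination -h4
    rw [← one_div, le_div_iff₀ h2, h3]
    have : 0 ≤ w ^ (m - n) := pow_nonneg h0 _
    linarith
  · rw [Finset.Ico_eq_empty (by omega)]
    simp only [Finset.sum_empty]
    exact div_nonneg (pow_nonneg h0 n) h2.le

end Geom

section Cutoff

variable {X : Type*} [MetricSpace X]

lemma sqrt_pow'' {x : ℝ} (hx : 0 ≤ x) (k : ℕ) : Real.sqrt (x ^ k) = Real.sqrt x ^ k := by
  induction k with
  | zero => simp
  | succ k ih => rw [pow_succ, pow_succ, Real.sqrt_mul (pow_nonneg hx k), ih]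

/-- existence of a dyadic annulus containing a point at distance `≥ δ`. -/
lemma exists_annulus {δ t : ℝ} (hδ : 0 < δ) (ht : δ ≤ t) :
    ∃ k : ℕ, 2 ^ k * δ ≤ t ∧ t < 2 ^ (k + 1) * δ := by
  set q : ℝ := t / δ with hq
  have hq1 : 1 ≤ q := (one_le_div hδ).mpr ht
  have hq0 : 0 ≤ q := by linarith
  have hfl : 1 ≤ ⌊q⌋₊ := Nat.one_le_floor_iff _ |>.mpr hq1
  set k := Nat.log 2 ⌊q⌋₊ with hk
  have h1 : 2 ^ k ≤ ⌊q⌋₊ := Nat.pow_log_le_self 2 (by omega)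
  have h2 : ⌊q⌋₊ < 2 ^ (k + 1) := Nat.lt_pow_succ_log_self (by norm_num) _
  refine ⟨k, ?_, ?_⟩
  · have : (2:ℝ) ^ k ≤ q := by
      calc (2:ℝ) ^ k = ((2 ^ k : ℕ) : ℝ) := by push_cast; ring
        _ ≤ (⌊q⌋₊ : ℝ) := by exact_mod_cast h1
        _ ≤ q := Nat.floor_le hq0
    calc (2:ℝ) ^ k * δ ≤ q * δ := by nlinarith
      _ = t := by rw [hq]; field_simp
  · have : q < (2:ℝ) ^ (k + 1) := by
      calc q < (⌊q⌋₊ : ℝ) + 1 := Nat.lt_floor_add_one q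
        _ ≤ ((2 ^ (k+1) : ℕ) : ℝ) := by exact_mod_cast Nat.succ_le_of_lt h2
        _ = (2:ℝ) ^ (k+1) := by push_cast; ring
    calc t = q * δ := by rw [hq]; field_simp
      _ < 2 ^ (k+1) * δ := by nlinarith

/-- Core construction: a finite-energy potential equal to 1 at `x`, vanishing on `Y`,
when every point of `Y` is at distance at least `δ` from `x`. -/
lemma exists_point_cutoff (rf : ResistanceForm X)
    (hR : ∀ x y : X, dist x y = rf.rmetric x y) {N : ℕ}
    (hcov : ∀ (x : X) (r : ℝ), ∃ s : Finset X, s.card ≤ N ∧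
      {y : X | dist x y < 2 * r} ⊆ ⋃ z ∈ s, {y : X | dist z y < r / 32})
    (x : X) (δ : ℝ) (hδ : 0 < δ) (Y : Set X) (hY : ∀ y ∈ Y, δ ≤ dist x y) :
    ∃ ψ ∈ rf.F, ψ x = 1 ∧ (∀ z, 0 ≤ ψ z ∧ ψ z ≤ 1) ∧ (∀ y ∈ Y, ψ y = 0) ∧
      rf.E ψ ψ ≤ 100 * (N : ℝ) ^ 2 / δ := by
  classical
  -- Step 1: per-scale killers
  have scale : ∀ k : ℕ, ∃ W ∈ rf.F, W x = 0 ∧ (∀ z, 0 ≤ W z) ∧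
      (∀ y ∈ Y, 2 ^ k * δ ≤ dist x y → dist x y < 2 ^ (k + 1) * δ → 1 ≤ W y) ∧
      rf.nrm W ≤ (N : ℝ) * Real.sqrt (8 / (2 ^ k * δ)) := by
    intro k
    set r : ℝ := 2 ^ k * δ with hr
    have hrpos : 0 < r := by positivity
    obtain ⟨s, hsc, hss⟩ := hcov x r
    have hv : ∀ z : X, ∃ v, v ∈ rf.F ∧ v x = 1 ∧ (∀ t, 0 ≤ v t ∧ v t ≤ 1) ∧
        (∀ y ∈ Y, r ≤ dist x y → dist z y < r / 32 → v y = 0) ∧ rf.E v v ≤ 8 / r := by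
      intro z
      by_cases hcz : ∃ y₀, y₀ ∈ Y ∧ r ≤ dist x y₀ ∧ dist z y₀ < r / 32
      · obtain ⟨y₀, hy₀Y, hy₀d, hy₀z⟩ := hcz
        obtain ⟨v, hvF, hv1, hvb, hv0, hvE⟩ := cluster_cutoff rf hR x y₀ r hrpos hy₀d
        refine ⟨v, hvF, hv1, hvb, ?_, hvE⟩
        intro y hyY hyd hyz
        apply hv0
        calc dist y₀ y ≤ dist y₀ z + dist z y := dist_triangle _ _ _
          _ ≤ r / 16 := by rw [dist_comm y₀ z]; linarith
      · refine ⟨fun _ => 1, rf.const_mem 1, rfl, fun t => by norm_num, ?_, ?_⟩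
        · intro y hyY hyd hyz
          exact absurd ⟨y, hyY, hyd, hyz⟩ hcz
        · rw [rf.E_const_zero]; positivity
    choose v hvF hv1 hvb hv0 hvE using hv
    set wz : X → X → ℝ := fun z => (fun _ : X => (1:ℝ)) - v z with hwz
    have hwzt : ∀ z t : X, wz z t = 1 - v z t := fun z t => rfl
    have hwzF : ∀ z : X, wz z ∈ rf.F := fun z => rf.sub_mem' (rf.const_mem 1) (hvF z)
    set W : X → ℝ := ∑ z ∈ s, wz z with hW
    have hmemnrm := rf.sum_mem_nrm s wz (fun z _ => hwzF z)
    have hEterm : ∀ z : X, rf.E (wz z) (wz z) = rf.E (v z) (v z) := by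
      intro z
      have he : wz z = ((-1 : ℝ) • v z) + fun _ => (1:ℝ) := by
        funext t; rw [hwzt]; simp; ring
      rw [he, rf.E_add_const (rf.smul_mem _ (hvF z)), rf.E_smul _ (hvF z)]
      ring
    refine ⟨W, hmemnrm.1, ?_, ?_, ?_, ?_⟩
    · rw [hW, Finset.sum_apply]
      apply Finset.sum_eq_zero
      intro z _
      rw [hwzt, hv1 z]; ring
    · intro t
      rw [hW, Finset.sum_apply]
      apply Finset.sum_nonneg
      intro z _
      rw [hwzt]
      linarith [(hvb z t).2]
    · intro y hyY hyd1 hyd2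
      have hyball : y ∈ {y : X | dist x y < 2 * r} := by
        simp only [Set.mem_setOf_eq]
        calc dist x y < 2 ^ (k+1) * δ := hyd2
          _ = 2 * r := by rw [hr, pow_succ]; ring
      obtain ⟨z, hzs, hzy⟩ := by simpa using hss hyball
      have hvzy : v z y = 0 := hv0 z y hyY hyd1 hzy
      rw [hW, Finset.sum_apply]
      calc (1:ℝ) = wz z y := by rw [hwzt, hvzy]; ring
        _ ≤ ∑ z' ∈ s, wz z' y := by
            apply Finset.single_le_sum (f := fun z' => wz z' y) _ hzs
            intro z' _
            show 0 ≤ wz z' y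
            rw [hwzt]
            linarith [(hvb z' y).2]
    · calc rf.nrm W ≤ ∑ z ∈ s, rf.nrm (wz z) := hmemnrm.2
        _ ≤ ∑ _z ∈ s, Real.sqrt (8 / r) := by
            apply Finset.sum_le_sum
            intro z _
            rw [ResistanceForm.nrm, hEterm z]
            exact Real.sqrt_le_sqrt (hvE z)
        _ = (s.card : ℝ) * Real.sqrt (8 / r) := by
            rw [Finset.sum_const, nsmul_eq_mul]
        _ ≤ (N : ℝ) * Real.sqrt (8 / r) := by
            apply mul_le_mul_of_nonneg_right _ (Real.sqrt_nonneg _)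
            exact_mod_cast hsc
  choose W hWF hWx hWpos hWann hWnrm using scale
  -- notation
  set c : ℝ := Real.sqrt (8 / δ) with hc
  set w : ℝ := Real.sqrt 2⁻¹ with hwdef
  have hw0 : 0 ≤ w := Real.sqrt_nonneg _
  have hw71 : w ≤ 0.71 := by
    rw [hwdef, show (0.71 : ℝ) = Real.sqrt (0.71 ^ 2) from
      (Real.sqrt_sq (by norm_num)).symm]
    exact Real.sqrt_le_sqrt (by norm_num)
  have hw1 : w < 1 := lt_of_le_of_lt hw71 (by norm_num)
  have hwpos : 0 < 1 - w := by linarith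
  have hsqrt : ∀ k : ℕ, Real.sqrt (8 / (2 ^ k * δ)) = c * w ^ k := by
    intro k
    have harg : 8 / (2 ^ k * δ) = 8 / δ * (2⁻¹) ^ k := by
      rw [inv_pow]; field_simp
    rw [harg, Real.sqrt_mul (by positivity : (0:ℝ) ≤ 8 / δ), hc, hwdef,
      sqrt_pow'' (by norm_num : (0:ℝ) ≤ 2⁻¹) k]
  have hWnrm' : ∀ k, rf.nrm (W k) ≤ (N : ℝ) * c * w ^ k := by
    intro k
    have := hWnrm k
    rw [hsqrt k] at this
    linarith [this]
  set B : ℝ := (N : ℝ) * c / (1 - w) with hB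
  have hBnn : 0 ≤ B := by
    apply div_nonneg _ hwpos.le
    positivity
  -- Step 2: partial sums
  set Φ : ℕ → X → ℝ := fun n => ∑ k ∈ Finset.range n, W k with hΦ
  have hΦF : ∀ n, Φ n ∈ rf.F := fun n =>
    (rf.sum_mem_nrm (Finset.range n) W (fun k _ => hWF k)).1
  have hΦx : ∀ n, Φ n x = 0 := by
    intro n
    rw [hΦ]
    simp only [Finset.sum_apply]
    exact Finset.sum_eq_zero fun k _ => hWx k
  have hΦpos : ∀ n z, 0 ≤ Φ n z := by
    intro n z
    rw [hΦ]
    simp only [Finset.sum_apply]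
    exact Finset.sum_nonneg fun k _ => hWpos k z
  have htail : ∀ n m : ℕ, n ≤ m → rf.nrm (Φ m - Φ n) ≤ B * w ^ n := by
    intro n m hnm
    have he : Φ m - Φ n = ∑ k ∈ Finset.Ico n m, W k := by
      rw [hΦ, Finset.sum_Ico_eq_sub W hnm]
    rw [he]
    obtain ⟨-, hn⟩ := rf.sum_mem_nrm (Finset.Ico n m) W (fun k _ => hWF k)
    calc rf.nrm (∑ k ∈ Finset.Ico n m, W k) ≤ ∑ k ∈ Finset.Ico n m, rf.nrm (W k) := hn
      _ ≤ ∑ k ∈ Finset.Ico n m, (N : ℝ) * c * w ^ k :=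
          Finset.sum_le_sum fun k _ => hWnrm' k
      _ = (N : ℝ) * c * ∑ k ∈ Finset.Ico n m, w ^ k := by rw [Finset.mul_sum]
      _ ≤ (N : ℝ) * c * (w ^ n / (1 - w)) := by
          apply mul_le_mul_of_nonneg_left (geom_Ico_le hw0 hw1 n m) (by positivity)
      _ = B * w ^ n := by rw [hB]; ring
  have hΦnrm : ∀ n, rf.nrm (Φ n) ≤ B := by
    intro n
    have h0 : Φ 0 = 0 := by rw [hΦ]; simp
    have := htail 0 n (Nat.zero_le n)
    rw [h0, sub_zero, pow_zero, mul_one] at this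
    exact this
  -- Step 3: Cauchy, limit
  have hcauchy : ∀ ε : ℝ, 0 < ε → ∃ K : ℕ, ∀ m ≥ K, ∀ n ≥ K,
      rf.E (Φ m - Φ n) (Φ m - Φ n) < ε := by
    intro ε hε
    obtain ⟨K, hK⟩ := exists_pow_lt_of_lt_one
      (show (0:ℝ) < Real.sqrt ε / (B + 1) by positivity) hw1
    refine ⟨K, ?_⟩
    have key : ∀ m n : ℕ, n ≤ m → K ≤ n → rf.E (Φ m - Φ n) (Φ m - Φ n) < ε := by
      intro m n hnm hKn
      have h1 : rf.nrm (Φ m - Φ n) ≤ B * w ^ n := htail n m hnm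
      have h2 : w ^ n ≤ w ^ K := pow_le_pow_of_le_one hw0 hw1.le hKn
      have h3 : rf.nrm (Φ m - Φ n) < Real.sqrt ε := by
        calc rf.nrm (Φ m - Φ n) ≤ B * w ^ n := h1
          _ ≤ B * w ^ K := by nlinarith
          _ ≤ (B + 1) * w ^ K := by nlinarith [pow_nonneg hw0 K]
          _ < (B + 1) * (Real.sqrt ε / (B + 1)) := by
              apply mul_lt_mul_of_pos_left hK (by linarith)
          _ = Real.sqrt ε := by field_simp
      have h4 : rf.E (Φ m - Φ n) (Φ m - Φ n) < Real.sqrt ε ^ 2 := by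
        rw [← rf.nrm_sq (rf.sub_mem' (hΦF m) (hΦF n))]
        apply pow_lt_pow_left₀ h3 (rf.nrm_nonneg _) (by norm_num)
      rwa [Real.sq_sqrt hε.le] at h4
    intro m hm n hn
    rcases le_total n m with h | h
    · exact key m n h hn
    · rw [rf.nrm_sub_comm (hΦF m) (hΦF n)]
      exact key n m h hm
  obtain ⟨v₀, hv₀F, hv₀conv⟩ := rf.complete Φ hΦF hcauchy
  set g : X → ℝ := v₀ + fun _ => -(v₀ x) with hg
  have hgF : g ∈ rf.F := rf.add_mem hv₀F (rf.const_mem _)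
  have hgx : g x = 0 := by simp [hg]
  have hgconv : ∀ ε : ℝ, 0 < ε → ∃ K : ℕ, ∀ n ≥ K,
      rf.E (g - Φ n) (g - Φ n) < ε := by
    intro ε hε
    obtain ⟨K, hK⟩ := hv₀conv ε hε
    refine ⟨K, fun n hn => ?_⟩
    have he : g - Φ n = (v₀ - Φ n) + fun _ => -(v₀ x) := by
      funext t; simp [hg, Pi.sub_apply, Pi.add_apply]; ring
    rw [he, rf.E_add_const (rf.sub_mem' hv₀F (hΦF n))]
    exact hK n hn
  -- Step 4: pointwise estimates
  have hpt : ∀ z : X, ∀ ε : ℝ, 0 < ε → ∃ n₀, ∀ n ≥ n₀, |g z - Φ n z| ≤ ε := by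
    intro z ε hε
    obtain ⟨K, hK⟩ := hgconv (ε ^ 2 / (dist x z + 1)) (by positivity)
    refine ⟨K, fun n hn => ?_⟩
    have h1 := holder rf hR (rf.sub_mem' hgF (hΦF n)) z x
    have h2 : (g - Φ n) x = 0 := by simp [Pi.sub_apply, hgx, hΦx n]
    have h3 : (g z - Φ n z) ^ 2 ≤ dist z x * rf.E (g - Φ n) (g - Φ n) := by
      simpa [Pi.sub_apply, h2] using h1
    have h4 : dist z x * rf.E (g - Φ n) (g - Φ n) ≤ ε ^ 2 := by
      have h5 := hK n hn
      have h6 : 0 ≤ dist z x := dist_nonneg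
      have h7 : dist z x = dist x z := dist_comm z x
      have h8 : dist x z < dist x z + 1 := by linarith
      have h9 : 0 ≤ rf.E (g - Φ n) (g - Φ n) :=
        rf.nonneg _ (rf.sub_mem' hgF (hΦF n))
      rw [h7]
      calc dist x z * rf.E (g - Φ n) (g - Φ n)
          ≤ (dist x z + 1) * (ε ^ 2 / (dist x z + 1)) := by
            apply mul_le_mul (by linarith) h5.le h9 (by linarith [dist_nonneg (x := x) (y := z)])
        _ = ε ^ 2 := by field_simp
    have h10 : (g z - Φ n z) ^ 2 ≤ ε ^ 2 := le_trans h3 h4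
    have := Real.sqrt_le_sqrt h10
    rwa [Real.sqrt_sq_eq_abs, Real.sqrt_sq hε.le] at this
  have hgpos : ∀ z, 0 ≤ g z := by
    intro z
    rw [← neg_nonpos]
    apply le_of_forall_pos_le_add
    intro ε hε
    obtain ⟨n₀, hn₀⟩ := hpt z ε hε
    have h1 := hn₀ n₀ le_rfl
    have h2 := hΦpos n₀ z
    have := abs_le.mp h1
    linarith [this.1, this.2]
  have hgY : ∀ y ∈ Y, 1 ≤ g y := by
    intro y hyY
    obtain ⟨k, hk1, hk2⟩ := exists_annulus hδ (hY y hyY)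
    apply le_of_forall_pos_le_add
    intro ε hε
    obtain ⟨n₀, hn₀⟩ := hpt y ε hε
    set n := max n₀ (k + 1) with hn
    have h1 := hn₀ n (le_max_left _ _)
    have h2 : 1 ≤ Φ n y := by
      rw [hΦ]
      simp only [Finset.sum_apply]
      calc (1:ℝ) ≤ W k y := hWann k y hyY hk1 hk2
        _ ≤ ∑ k' ∈ Finset.range n, W k' y := by
            apply Finset.single_le_sum (f := fun k' => W k' y)
              (fun k' _ => hWpos k' y)
            rw [Finset.mem_range]
            omega
    have := abs_le.mp h1
    linarith [this.1, this.2]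
  have hgE : rf.E g g ≤ B ^ 2 := by
    have hnrm : rf.nrm g ≤ B := by
      apply le_of_forall_pos_le_add
      intro ε hε
      obtain ⟨K, hK⟩ := hgconv (ε ^ 2) (by positivity)
      have h1 : rf.nrm (g - Φ K) ≤ ε := by
        rw [ResistanceForm.nrm]
        have := (hK K le_rfl).le
        calc Real.sqrt (rf.E (g - Φ K) (g - Φ K)) ≤ Real.sqrt (ε ^ 2) :=
            Real.sqrt_le_sqrt this
          _ = ε := Real.sqrt_sq hε.le
      have h2 : g = (g - Φ K) + Φ K := by funext t; simp
      calc rf.nrm g = rf.nrm ((g - Φ K) + Φ K) := by rw [← h2]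
        _ ≤ rf.nrm (g - Φ K) + rf.nrm (Φ K) :=
            rf.nrm_add_le (rf.sub_mem' hgF (hΦF K)) (hΦF K)
        _ ≤ B + ε := by linarith [hΦnrm K]
    calc rf.E g g = rf.nrm g ^ 2 := (rf.nrm_sq hgF).symm
      _ ≤ B ^ 2 := by nlinarith [rf.nrm_nonneg g]
  -- Step 5: final truncation
  set f₀ : X → ℝ := (fun _ => (1:ℝ)) - g with hf₀
  have hf₀F : f₀ ∈ rf.F := rf.sub_mem' (rf.const_mem 1) hgF
  have hf₀E : rf.E f₀ f₀ = rf.E g g := by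
    have he : f₀ = ((-1 : ℝ) • g) + fun _ => (1:ℝ) := by
      funext t; simp [hf₀, Pi.sub_apply]; ring
    rw [he, rf.E_add_const (rf.smul_mem _ hgF), rf.E_smul _ hgF]
    ring
  obtain ⟨hmem, hle⟩ := rf.markov f₀ hf₀F
  have hfinal : B ^ 2 ≤ 100 * (N : ℝ) ^ 2 / δ := by
    have hc2 : c ^ 2 = 8 / δ := Real.sq_sqrt (by positivity)
    have h8 : (8:ℝ) ≤ 100 * (1 - w) ^ 2 := by nlinarith [hw71, hw0]
    have hB2 : B ^ 2 = (N : ℝ) ^ 2 * (8 / δ) / (1 - w) ^ 2 := by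
      rw [hB, div_pow, mul_pow, hc2]
    rw [hB2, div_le_div_iff₀ (by positivity) hδ]
    have he : (N : ℝ) ^ 2 * (8 / δ) * δ = 8 * (N : ℝ) ^ 2 := by field_simp
    rw [he]
    nlinarith [sq_nonneg (N : ℝ), hδ]
  refine ⟨fun z => max 0 (min 1 (f₀ z)), hmem, ?_, ?_, ?_, ?_⟩
  · have : f₀ x = 1 := by simp [hf₀, Pi.sub_apply, hgx]
    simp [this]
  · intro z; exact ⟨le_max_left _ _, max_le (by norm_num) (min_le_left _ _)⟩
  · intro y hyY
    have : f₀ y ≤ 0 := by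
      simp only [hf₀, Pi.sub_apply]
      linarith [hgY y hyY]
    show (0:ℝ) ⊔ (1 ⊓ f₀ y) = 0
    exact max_eq_left (le_trans (min_le_right _ _) this)
  · calc rf.E (fun z => max 0 (min 1 (f₀ z))) (fun z => max 0 (min 1 (f₀ z)))
        ≤ rf.E f₀ f₀ := hle
      _ = rf.E g g := hf₀E
      _ ≤ B ^ 2 := hgE
      _ ≤ 100 * (N : ℝ) ^ 2 / δ := hfinal

end Cutoff

theorem setRes_pos_of_bounded_of_sep' {X : Type*} [MetricSpace X]
    (rf : ResistanceForm X) (hR : ∀ x y : X, dist x y = rf.rmetric x y)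
    (hdb : DoublingOf fun x y : X => dist x y)
    (A₁ A₂ : Set X) (h₁ : A₁.Nonempty) (h₂ : A₂.Nonempty)
    (hbd : Bornology.IsBounded A₁)
    (hsep : ∃ δ : ℝ, 0 < δ ∧ ∀ x ∈ A₁, ∀ y ∈ A₂, δ ≤ dist x y) :
    0 < rf.setRes A₁ A₂ := by
  classical
  obtain ⟨δ, hδ, hsepd⟩ := hsep
  obtain ⟨x₀, hx₀⟩ := h₁
  obtain ⟨N₀, hN₀⟩ := hdb
  have hdb' : ∀ (x : X) (r : ℝ), ∃ s : Finset X, s.card ≤ N₀ ∧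
      {y : X | dist x y < 2 * r} ⊆ ⋃ z ∈ s, {y : X | dist z y < r} := hN₀
  -- the pre-iterated covering with shrinking factor 1/32
  have hcov : ∀ (x : X) (r : ℝ), ∃ s : Finset X, s.card ≤ N₀ ^ 6 ∧
      {y : X | dist x y < 2 * r} ⊆ ⋃ z ∈ s, {y : X | dist z y < r / 32} := by
    intro x r
    obtain ⟨s, h1, h2⟩ := iter_cover hdb' 5 x r
    refine ⟨s, h1, ?_⟩
    have h32 : (2:ℝ) ^ 5 = 32 := by norm_num
    rwa [h32] at h2
  set N' : ℝ := ((N₀ ^ 6 : ℕ) : ℝ) with hN'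
  have hN'0 : 0 ≤ N' := Nat.cast_nonneg _
  set C₁ : ℝ := 100 * N' ^ 2 / δ with hC₁
  have hC₁0 : 0 ≤ C₁ := by positivity
  -- cutoff functions for points of A₁
  have hpsi : ∀ p : X, ∃ ψ, ψ ∈ rf.F ∧ (∀ z, 0 ≤ ψ z ∧ ψ z ≤ 1) ∧
      (∀ y ∈ A₂, ψ y = 0) ∧ (p ∈ A₁ → (ψ p = 1 ∧ rf.E ψ ψ ≤ C₁)) := by
    intro p
    by_cases hp : p ∈ A₁
    · obtain ⟨ψ, hF, hp1, hb, h0, hE⟩ := exists_point_cutoff rf hR hcov p δ hδ A₂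
        (fun y hy => hsepd p hp y hy)
      exact ⟨ψ, hF, hb, h0, fun _ => ⟨hp1, hE⟩⟩
    · refine ⟨fun _ => 0, rf.const_mem 0, fun z => by norm_num, fun y _ => rfl,
        fun h => absurd h hp⟩
  choose ψ hψF hψb hψ0 hψA using hpsi
  -- the net radius
  set ρ : ℝ := δ / (400 * N' ^ 2 + 1) with hρ
  have hρ0 : 0 < ρ := by positivity
  -- key: near a net point of A₁ the cutoff is at least 1/2
  have hhalf : ∀ p ∈ A₁, ∀ z : X, dist p z ≤ ρ → 1 / 2 ≤ ψ p z := by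
    intro p hp z hz
    obtain ⟨hp1, hpE⟩ := hψA p hp
    have h1 := holder rf hR (hψF p) z p
    have h2 : (ψ p z - 1) ^ 2 ≤ dist z p * rf.E (ψ p) (ψ p) := by rwa [hp1] at h1
    have h3 : dist z p * rf.E (ψ p) (ψ p) ≤ ρ * C₁ := by
      apply mul_le_mul _ hpE (rf.nonneg _ (hψF p)) hρ0.le
      rwa [dist_comm z p]
    have h4 : ρ * C₁ ≤ 1 / 4 := by
      rw [hρ, hC₁]
      rw [div_mul_div_comm]
      rw [div_le_div_iff₀ (by positivity) (by norm_num)]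
      ring_nf
      nlinarith [sq_nonneg N', hδ, sq_nonneg (N' * δ)]
    nlinarith [h2, h3, h4]
  -- a finite ρ-net of A₁ with centers in A₁
  obtain ⟨r₀, hr₀⟩ : ∃ r₀ : ℝ, A₁ ⊆ Metric.ball x₀ r₀ := hbd.subset_ball x₀
  set R₁ : ℝ := max r₀ 1 with hR₁
  have hR₁0 : 0 < R₁ := lt_of_lt_of_le one_pos (le_max_right _ _)
  obtain ⟨m, hm⟩ : ∃ m : ℕ, 2 * R₁ / ρ < 2 ^ m := pow_unbounded_of_one_lt _ one_lt_two
  obtain ⟨s, -, hscov⟩ := iter_cover hdb' m x₀ R₁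
  set R' : ℝ := R₁ / 2 ^ m with hR'
  have hR'ρ : 2 * R' ≤ ρ := by
    have h2m : (0:ℝ) < 2 ^ m := by positivity
    have h1 : 2 * R₁ < 2 ^ m * ρ := by
      have := (div_lt_iff₀ hρ0).mp hm
      linarith
    rw [hR', show 2 * (R₁ / 2 ^ m) = 2 * R₁ / 2 ^ m from by ring,
      div_le_iff₀ h2m]
    nlinarith
  have hA₁s : ∀ a ∈ A₁, ∃ z ∈ s, dist z a < R' := by
    intro a ha
    have : a ∈ {y : X | dist x₀ y < 2 * R₁} := by
      simp only [Set.mem_setOf_eq]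
      have := hr₀ ha
      rw [Metric.mem_ball] at this
      rw [dist_comm]
      calc dist a x₀ < r₀ := this
        _ ≤ R₁ := le_max_left _ _
        _ < 2 * R₁ := by linarith
    obtain ⟨z, hz1, hz2⟩ := by simpa using hscov this
    exact ⟨z, hz1, hz2⟩
  -- recenter the net inside A₁
  have hq : ∀ z : X, ∃ q, (∃ a ∈ A₁, dist z a < R') → (q ∈ A₁ ∧ dist z q < R') := by
    intro z
    by_cases hz : ∃ a ∈ A₁, dist z a < R'
    · obtain ⟨a, ha1, ha2⟩ := hz
      exact ⟨a, fun _ => ⟨ha1, ha2⟩⟩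
    · exact ⟨x₀, fun h => absurd h hz⟩
  choose q hq using hq
  -- final admissible function
  set G : X → ℝ := (2 : ℝ) • ∑ z ∈ s, ψ (q z) with hG
  have hGF : G ∈ rf.F :=
    rf.smul_mem 2 (rf.sum_mem_nrm s (fun z => ψ (q z)) (fun z _ => hψF _)).1
  obtain ⟨hmem, -⟩ := rf.markov G hGF
  have hu1 : ∀ a ∈ A₁, (fun t => max 0 (min 1 (G t))) a = 1 := by
    intro a ha
    obtain ⟨z, hzs, hza⟩ := hA₁s a ha
    obtain ⟨hqA, hqd⟩ := hq z ⟨a, ha, hza⟩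
    have hda : dist (q z) a ≤ ρ := by
      calc dist (q z) a ≤ dist (q z) z + dist z a := dist_triangle _ _ _
        _ ≤ R' + R' := by
            rw [dist_comm (q z) z]
            exact add_le_add hqd.le hza.le
        _ = 2 * R' := by ring
        _ ≤ ρ := hR'ρ
    have hterm : 1 / 2 ≤ ψ (q z) a := hhalf (q z) hqA a hda
    have hsum : 1 / 2 ≤ ∑ z' ∈ s, ψ (q z') a := by
      calc (1:ℝ)/2 ≤ ψ (q z) a := hterm
        _ ≤ ∑ z' ∈ s, ψ (q z') a :=
            Finset.single_le_sum (f := fun z' => ψ (q z') a)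
              (fun z' _ => (hψb (q z') a).1) hzs
    have hGa : 1 ≤ G a := by
      rw [hG]
      simp only [Pi.smul_apply, Finset.sum_apply, smul_eq_mul]
      linarith
    show (0:ℝ) ⊔ (1 ⊓ G a) = 1
    rw [min_eq_left hGa]
    norm_num
  have hu0 : ∀ b ∈ A₂, (fun t => max 0 (min 1 (G t))) b = 0 := by
    intro b hb
    have hGb : G b = 0 := by
      rw [hG]
      simp only [Pi.smul_apply, Finset.sum_apply, smul_eq_mul]
      rw [Finset.sum_eq_zero (fun z _ => hψ0 (q z) b hb)]
      ring
    show (0:ℝ) ⊔ (1 ⊓ G b) = 0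
    rw [hGb]
    norm_num
  have hex : ∃ u ∈ rf.F, (∀ t ∈ A₁, u t = 1) ∧ (∀ t ∈ A₂, u t = 0) :=
    ⟨fun t => max 0 (min 1 (G t)), hmem, hu1, hu0⟩
  rw [ResistanceForm.setRes, if_pos ⟨⟨x₀, hx₀⟩, h₂⟩, if_pos hex]
  exact ENNReal.inv_pos.mpr ENNReal.ofReal_ne_top

end RFAux

/-- Under the standing assumptions, if `A₁, A₂` are nonempty subsets
with `A₁` bounded in `(X,R)` and `inf {R(x,y) : x ∈ A₁, y ∈ A₂} > 0`, then
`𝓡(A₁,A₂) > 0`. -/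
theorem setRes_pos_of_bounded_of_sep {X : Type*} [MetricSpace X] [CompleteSpace X]
    (rf : ResistanceForm X) (hR : ∀ x y : X, dist x y = rf.rmetric x y)
    (hdb : DoublingOf fun x y : X => dist x y)
    (hup : UniformlyPerfectOf fun x y : X => dist x y)
    (A₁ A₂ : Set X) (h₁ : A₁.Nonempty) (h₂ : A₂.Nonempty)
    (hbd : Bornology.IsBounded A₁)
    (hsep : ∃ δ : ℝ, 0 < δ ∧ ∀ x ∈ A₁, ∀ y ∈ A₂, δ ≤ dist x y) :
    0 < rf.setRes A₁ A₂ := by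
  exact setRes_pos_of_bounded_of_sep' rf hR hdb A₁ A₂ h₁ h₂ hbd hsep
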